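/- Let 0 < α < ω₁ and let X be a topological space. For any disjoint sets A, B ⊆ X of the α'th functionally multiplicative class there exists a functionally ambiguous set C of class α with A ⊆ C ⊆ X \ B. -/

import Mathlib

open Set Topology Ordinal

/-- A family of sets is discrete if every point has an open neighborhood
meeting at most one member of the family. -/
def DiscreteFam {X I : Type*} [TopologicalSpace X] (U : I → Set X) : Prop :=
  ∀ x : X, ∃ V : Set X, IsOpen V ∧ x ∈ V ∧
    ∀ i j : I, (V ∩ U i).Nonempty → (V ∩ U j).Nonempty → i = j

/-- A set is functionally closed (a zero set) if it is the preimage of `{0}`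
under a continuous real-valued function. -/
def FunClosed {X : Type*} [TopologicalSpace X] (F : Set X) : Prop :=
  ∃ f : X → ℝ, Continuous f ∧ F = f ⁻¹' {0}

/-- A set is functionally open if its complement is functionally closed. -/
def FunOpen {X : Type*} [TopologicalSpace X] (U : Set X) : Prop :=
  FunClosed Uᶜ

/-- The pair (α'th functionally multiplicative class, α'th functionally additive class),
defined by transfinite recursion. -/
noncomputable def FunClassPair (X : Type*) [TopologicalSpace X] (α : Ordinal) :
    Set (Set X) × Set (Set X) :=
  if α = 0 then ({F | FunClosed F}, {U | FunOpen U})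
  else
    ({ A | ∃ f : ℕ → Set X, (∀ n, ∃ β, ∃ _ : β < α, f n ∈ (FunClassPair X β).2) ∧ A = ⋂ n, f n },
     { A | ∃ f : ℕ → Set X, (∀ n, ∃ β, ∃ _ : β < α, f n ∈ (FunClassPair X β).1) ∧ A = ⋃ n, f n })
termination_by α

/-- The α'th functionally multiplicative class. -/
noncomputable def FunMul (X : Type*) [TopologicalSpace X] (α : Ordinal) : Set (Set X) :=
  (FunClassPair X α).1

/-- The α'th functionally additive class. -/
noncomputable def FunAdd (X : Type*) [TopologicalSpace X] (α : Ordinal) : Set (Set X) :=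
  (FunClassPair X α).2

/-- Functionally ambiguous sets of class α. -/
noncomputable def FunAmb {X : Type*} [TopologicalSpace X] (α : Ordinal) (A : Set X) : Prop :=
  A ∈ FunAdd X α ∧ A ∈ FunMul X α

/-- A family is strongly functionally discrete (sfd). -/
def SFDFam {X I : Type*} [TopologicalSpace X] (A : I → Set X) : Prop :=
  ∃ U : I → Set X, DiscreteFam U ∧ (∀ i, FunOpen (U i)) ∧ ∀ i, closure (A i) ⊆ U i

/-- A collection of sets is sfd (viewed as a family indexed by itself). -/
def SFDSet {X : Type*} [TopologicalSpace X] (𝒜 : Set (Set X)) : Prop :=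
  SFDFam (fun b : 𝒜 => (b : Set X))

/-- A collection of sets is a well sfd-family. -/
def WellSFDSet {X : Type*} [TopologicalSpace X] (𝒜 : Set (Set X)) : Prop :=
  ∃ U F : 𝒜 → Set X, DiscreteFam U ∧ DiscreteFam F ∧
    (∀ b, FunOpen (U b)) ∧ (∀ b, FunClosed (F b)) ∧
    ∀ b : 𝒜, (b : Set X) ⊆ F b ∧ F b ⊆ U b

/-- An indexed family is σ-sfd if the index set splits into countably many pieces
on each of which the family is sfd. -/
def SigmaSFDFam {X I : Type*} [TopologicalSpace X] (A : I → Set X) : Prop :=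
  ∃ J : ℕ → Set I, (∀ n, SFDFam (fun i : J n => A i)) ∧ (⋃ n, J n) = Set.univ

/-- `B` is a base for the mapping `f`: every preimage of an open set is a union
of members of `B`. -/
def IsBaseFor {X Y : Type*} [TopologicalSpace X] [TopologicalSpace Y]
    (B : Set (Set X)) (f : X → Y) : Prop :=
  ∀ V : Set Y, IsOpen V → ∃ S ⊆ B, f ⁻¹' V = ⋃₀ S

/-- `f` has a σ-strongly-functionally-discrete base. -/
def SigmaSFD {X Y : Type*} [TopologicalSpace X] [TopologicalSpace Y] (f : X → Y) : Prop :=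
  ∃ B : ℕ → Set (Set X), (∀ n, SFDSet (B n)) ∧ IsBaseFor (⋃ n, B n) f

/-- `f` has a σ-sfd base consisting of functionally ambiguous sets of class α. -/
noncomputable def SigmaSFDAmb {X Y : Type*} [TopologicalSpace X] [TopologicalSpace Y]
    (α : Ordinal) (f : X → Y) : Prop :=
  ∃ B : ℕ → Set (Set X), (∀ n, SFDSet (B n)) ∧ (∀ n, ∀ b ∈ B n, FunAmb α b) ∧
    IsBaseFor (⋃ n, B n) f

/-- `f` belongs to the α'th functionally Lebesgue class. -/
noncomputable def LebClass {X Y : Type*} [TopologicalSpace X] [TopologicalSpace Y]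
    (α : Ordinal) (f : X → Y) : Prop :=
  ∀ V : Set Y, IsOpen V → f ⁻¹' V ∈ FunAdd X α

/-- `Y` has a σ-disjoint base. -/
def SigmaDisjointBase (Y : Type*) [TopologicalSpace Y] : Prop :=
  ∃ V : ℕ → Set (Set Y), (∀ m, (V m).PairwiseDisjoint id) ∧
    TopologicalSpace.IsTopologicalBasis (⋃ m, V m)
section Aux

variable {X : Type*} [TopologicalSpace X]

lemma funMul_zero' : FunMul X 0 = {F | FunClosed F} := by
  rw [FunMul, FunClassPair]; simp

lemma funAdd_zero' : FunAdd X 0 = {F | FunOpen F} := by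
  rw [FunAdd, FunClassPair]; simp

lemma funMul_eq' {α : Ordinal} (hα : α ≠ 0) :
    FunMul X α = { A | ∃ f : ℕ → Set X, (∀ n, ∃ β, β < α ∧ f n ∈ FunAdd X β) ∧ A = ⋂ n, f n } := by
  rw [FunMul, FunClassPair]
  simp only [if_neg hα, FunAdd]
  ext A; constructor
  · rintro ⟨f, h, rfl⟩; exact ⟨f, fun n => (h n).imp (fun β ⟨hβ, hm⟩ => ⟨hβ, hm⟩), rfl⟩
  · rintro ⟨f, h, rfl⟩; exact ⟨f, fun n => (h n).imp (fun β ⟨hβ, hm⟩ => ⟨hβ, hm⟩), rfl⟩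

lemma funAdd_eq' {α : Ordinal} (hα : α ≠ 0) :
    FunAdd X α = { A | ∃ f : ℕ → Set X, (∀ n, ∃ β, β < α ∧ f n ∈ FunMul X β) ∧ A = ⋃ n, f n } := by
  rw [FunAdd, FunClassPair]
  simp only [if_neg hα, FunMul]
  ext A; constructor
  · rintro ⟨f, h, rfl⟩; exact ⟨f, fun n => (h n).imp (fun β ⟨hβ, hm⟩ => ⟨hβ, hm⟩), rfl⟩
  · rintro ⟨f, h, rfl⟩; exact ⟨f, fun n => (h n).imp (fun β ⟨hβ, hm⟩ => ⟨hβ, hm⟩), rfl⟩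

lemma funClosed_inter' {F G : Set X} (hF : FunClosed F) (hG : FunClosed G) :
    FunClosed (F ∩ G) := by
  obtain ⟨f, hf, rfl⟩ := hF; obtain ⟨g, hg, rfl⟩ := hG
  refine ⟨fun x => (f x) ^ 2 + (g x) ^ 2, by continuity, ?_⟩
  ext x
  simp only [mem_inter_iff, mem_preimage, mem_singleton_iff]
  rw [add_eq_zero_iff_of_nonneg (sq_nonneg _) (sq_nonneg _), sq_eq_zero_iff, sq_eq_zero_iff]

lemma funClosed_empty' : FunClosed (∅ : Set X) :=
  ⟨fun _ => 1, continuous_const, by ext x; simp⟩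

lemma funOpen_empty' : FunOpen (∅ : Set X) :=
  ⟨fun _ => 0, continuous_const, by ext x; simp⟩

lemma funClosed_le_abs' {f : X → ℝ} (hf : Continuous f) (ε : ℝ) :
    FunClosed {x | ε ≤ |f x|} := by
  refine ⟨fun x => max (ε - |f x|) 0, by continuity, ?_⟩
  ext x
  simp only [mem_setOf_eq, mem_preimage, mem_singleton_iff]
  constructor
  · intro h; exact max_eq_right (sub_nonpos.2 h)
  · intro h
    have h2 := le_max_left (ε - |f x|) 0
    rw [h] at h2
    linarith

lemma funOpen_abs_lt' {f : X → ℝ} (hf : Continuous f) (ε : ℝ) :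
    FunOpen {x | |f x| < ε} := by
  have h : {x | |f x| < ε}ᶜ = {x | ε ≤ |f x|} := by ext x; simp [not_lt]
  rw [FunOpen, h]
  exact funClosed_le_abs' hf ε

lemma funClosed_mem_funMul' {F : Set X} (hF : FunClosed F) (α : Ordinal) :
    F ∈ FunMul X α := by
  rcases eq_or_ne α 0 with rfl | hα
  · rw [funMul_zero']; exact hF
  · rw [funMul_eq' hα]
    obtain ⟨f, hf, rfl⟩ := hF
    refine ⟨fun n => {x | |f x| < ((n : ℝ) + 1)⁻¹}, fun n =>
      ⟨0, pos_iff_ne_zero.2 hα, by rw [funAdd_zero']; exact funOpen_abs_lt' hf _⟩, ?_⟩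
    ext x
    simp only [mem_preimage, mem_singleton_iff, mem_iInter, mem_setOf_eq]
    constructor
    · intro h n; rw [h, abs_zero]; positivity
    · intro h
      by_contra hx
      obtain ⟨n, hn⟩ := exists_nat_one_div_lt (abs_pos.2 hx)
      have h2 := h n
      rw [one_div] at hn
      linarith

lemma funOpen_mem_funAdd' {U : Set X} (hU : FunOpen U) (α : Ordinal) :
    U ∈ FunAdd X α := by
  rcases eq_or_ne α 0 with rfl | hα
  · rw [funAdd_zero']; exact hU
  · rw [funAdd_eq' hα]
    obtain ⟨f, hf, hUc⟩ := hU
    refine ⟨fun n => {x | ((n : ℝ) + 1)⁻¹ ≤ |f x|}, fun n =>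
      ⟨0, pos_iff_ne_zero.2 hα, by rw [funMul_zero']; exact funClosed_le_abs' hf _⟩, ?_⟩
    have hU' : U = {x | f x ≠ 0} := by
      rw [← compl_compl U, hUc]; ext x; simp
    rw [hU']
    ext x
    simp only [mem_setOf_eq, mem_iUnion]
    constructor
    · intro hx
      obtain ⟨n, hn⟩ := exists_nat_one_div_lt (abs_pos.2 hx)
      rw [one_div] at hn
      exact ⟨n, hn.le⟩
    · rintro ⟨n, hn⟩
      intro h0
      rw [h0, abs_zero] at hn
      have : (0:ℝ) < ((n : ℝ) + 1)⁻¹ := by positivity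
      linarith

lemma funMul_mono' {β α : Ordinal} (h : β ≤ α) : FunMul X β ⊆ FunMul X α := by
  rcases h.lt_or_eq with h | rfl
  · intro A hA
    have hα : α ≠ 0 := pos_iff_ne_zero.1 ((zero_le (a := β)).trans_lt h)
    rcases eq_or_ne β 0 with rfl | hβ
    · rw [funMul_zero'] at hA; exact funClosed_mem_funMul' hA α
    · rw [funMul_eq' hβ] at hA
      rw [funMul_eq' hα]
      obtain ⟨f, hf, rfl⟩ := hA
      exact ⟨f, fun n => (hf n).imp fun γ ⟨hγ, hm⟩ => ⟨hγ.trans h, hm⟩, rfl⟩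
  · exact subset_rfl

lemma funAdd_mono' {β α : Ordinal} (h : β ≤ α) : FunAdd X β ⊆ FunAdd X α := by
  rcases h.lt_or_eq with h | rfl
  · intro A hA
    have hα : α ≠ 0 := pos_iff_ne_zero.1 ((zero_le (a := β)).trans_lt h)
    rcases eq_or_ne β 0 with rfl | hβ
    · rw [funAdd_zero'] at hA; exact funOpen_mem_funAdd' hA α
    · rw [funAdd_eq' hβ] at hA
      rw [funAdd_eq' hα]
      obtain ⟨f, hf, rfl⟩ := hA
      exact ⟨f, fun n => (hf n).imp fun γ ⟨hγ, hm⟩ => ⟨hγ.trans h, hm⟩, rfl⟩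
  · exact subset_rfl

lemma funCompl' : ∀ α : Ordinal, ∀ A : Set X,
    (A ∈ FunMul X α → Aᶜ ∈ FunAdd X α) ∧ (A ∈ FunAdd X α → Aᶜ ∈ FunMul X α) := by
  intro α
  induction α using Ordinal.induction with
  | h α IH =>
    intro A
    rcases eq_or_ne α 0 with rfl | hα
    · rw [funMul_zero', funAdd_zero']
      constructor
      · intro h
        show FunClosed Aᶜᶜ
        rwa [compl_compl]
      · intro h; exact h
    · constructor
      · intro hA
        rw [funMul_eq' hα] at hA
        rw [funAdd_eq' hα]
        obtain ⟨f, hf, rfl⟩ := hA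
        rw [compl_iInter]
        exact ⟨fun n => (f n)ᶜ, fun n => (hf n).imp fun β ⟨hβ, hm⟩ =>
          ⟨hβ, (IH β hβ (f n)).2 hm⟩, rfl⟩
      · intro hA
        rw [funAdd_eq' hα] at hA
        rw [funMul_eq' hα]
        obtain ⟨f, hf, rfl⟩ := hA
        rw [compl_iUnion]
        exact ⟨fun n => (f n)ᶜ, fun n => (hf n).imp fun β ⟨hβ, hm⟩ =>
          ⟨hβ, (IH β hβ (f n)).1 hm⟩, rfl⟩

lemma funAdd_iUnion' {α : Ordinal} (hα : α ≠ 0) {A : ℕ → Set X}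
    (h : ∀ n, A n ∈ FunAdd X α) : (⋃ n, A n) ∈ FunAdd X α := by
  rw [funAdd_eq' hα] at h ⊢
  choose f hf hA using h
  set e := (Denumerable.eqv (ℕ × ℕ)).symm with he
  refine ⟨fun k => f (e k).1 (e k).2, fun k => hf _ _, ?_⟩
  ext x
  simp only [mem_iUnion]
  constructor
  · rintro ⟨n, hx⟩
    rw [hA n, mem_iUnion] at hx
    obtain ⟨m, hm⟩ := hx
    exact ⟨e.symm (n, m), by simpa using hm⟩
  · rintro ⟨k, hk⟩
    exact ⟨(e k).1, by rw [hA]; exact mem_iUnion.2 ⟨(e k).2, hk⟩⟩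

lemma funMul_iInter' {α : Ordinal} (hα : α ≠ 0) {A : ℕ → Set X}
    (h : ∀ n, A n ∈ FunMul X α) : (⋂ n, A n) ∈ FunMul X α := by
  rw [funMul_eq' hα] at h ⊢
  choose f hf hA using h
  set e := (Denumerable.eqv (ℕ × ℕ)).symm with he
  refine ⟨fun k => f (e k).1 (e k).2, fun k => hf _ _, ?_⟩
  ext x
  simp only [mem_iInter]
  constructor
  · intro hx k
    have h1 := hx (e k).1
    rw [hA, mem_iInter] at h1
    exact h1 (e k).2
  · intro hx n
    rw [hA, mem_iInter]
    intro m
    have h1 := hx (e.symm (n, m))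
    simpa using h1

lemma funMul_inter' {α : Ordinal} {A B : Set X} (hA : A ∈ FunMul X α)
    (hB : B ∈ FunMul X α) : A ∩ B ∈ FunMul X α := by
  rcases eq_or_ne α 0 with rfl | hα
  · rw [funMul_zero'] at *; exact funClosed_inter' hA hB
  · have h : A ∩ B = ⋂ n, (fun n : ℕ => if n = 0 then A else B) n := by
      ext x
      simp only [mem_inter_iff, mem_iInter]
      constructor
      · rintro ⟨h1, h2⟩ n
        by_cases h : n = 0 <;> simp [h, h1, h2]
      · intro h
        exact ⟨by simpa using h 0, by simpa using h 1⟩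
    rw [h]
    exact funMul_iInter' hα (fun n => by by_cases h : n = 0 <;> simp [h, hA, hB])

lemma funAdd_inter' {α : Ordinal} (hα : α ≠ 0) {A B : Set X} (hA : A ∈ FunAdd X α)
    (hB : B ∈ FunAdd X α) : A ∩ B ∈ FunAdd X α := by
  rw [funAdd_eq' hα] at hA hB ⊢
  obtain ⟨f, hf, rfl⟩ := hA
  obtain ⟨g, hg, rfl⟩ := hB
  set e := (Denumerable.eqv (ℕ × ℕ)).symm with he
  refine ⟨fun k => f (e k).1 ∩ g (e k).2, fun k => ?_, ?_⟩
  · obtain ⟨β, hβ, hfm⟩ := hf (e k).1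
    obtain ⟨γ, hγ, hgm⟩ := hg (e k).2
    exact ⟨max β γ, max_lt hβ hγ,
      funMul_inter' (funMul_mono' (le_max_left _ _) hfm) (funMul_mono' (le_max_right _ _) hgm)⟩
  · ext x
    simp only [mem_inter_iff, mem_iUnion]
    constructor
    · rintro ⟨⟨n, hn⟩, ⟨m, hm⟩⟩
      refine ⟨e.symm (n, m), ?_⟩
      simpa using ⟨hn, hm⟩
    · rintro ⟨k, h1, h2⟩
      exact ⟨⟨_, h1⟩, ⟨_, h2⟩⟩

lemma funAmb_compl' {α : Ordinal} {A : Set X} (hA : FunAmb α A) : FunAmb α Aᶜ :=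
  ⟨(funCompl' α A).1 hA.2, (funCompl' α A).2 hA.1⟩

lemma funAmb_inter' {α : Ordinal} (hα : α ≠ 0) {A B : Set X} (hA : FunAmb α A)
    (hB : FunAmb α B) : FunAmb α (A ∩ B) :=
  ⟨funAdd_inter' hα hA.1 hB.1, funMul_inter' hA.2 hB.2⟩

lemma funAmb_union' {α : Ordinal} (hα : α ≠ 0) {A B : Set X} (hA : FunAmb α A)
    (hB : FunAmb α B) : FunAmb α (A ∪ B) := by
  have h : A ∪ B = (Aᶜ ∩ Bᶜ)ᶜ := by rw [compl_inter, compl_compl, compl_compl]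
  rw [h]
  exact funAmb_compl' (funAmb_inter' hα (funAmb_compl' hA) (funAmb_compl' hB))

lemma funAmb_empty' {α : Ordinal} : FunAmb α (∅ : Set X) :=
  ⟨funOpen_mem_funAdd' funOpen_empty' α, funClosed_mem_funMul' funClosed_empty' α⟩

end Aux

theorem stmt11 {X : Type*} [TopologicalSpace X] (α : Ordinal) (h0 : 0 < α) (hα : α < ω₁)
    (A B : Set X) (hA : A ∈ FunMul X α) (hB : B ∈ FunMul X α) (hd : Disjoint A B) :
    ∃ C : Set X, FunAmb α C ∧ A ⊆ C ∧ C ⊆ Bᶜ := by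
  classical
  have hα0 : α ≠ 0 := h0.ne'
  -- decompose complements into ambiguous pieces
  have hAc : Aᶜ ∈ FunAdd X α := (funCompl' α A).1 hA
  have hBc : Bᶜ ∈ FunAdd X α := (funCompl' α B).1 hB
  rw [funAdd_eq' hα0] at hAc hBc
  obtain ⟨P, hP, hPU⟩ := hAc
  obtain ⟨Q, hQ, hQU⟩ := hBc
  have hPamb : ∀ n, FunAmb α (P n) := by
    intro n
    obtain ⟨β, hβ, hm⟩ := hP n
    refine ⟨?_, funMul_mono' hβ.le hm⟩
    rw [funAdd_eq' hα0]
    exact ⟨fun _ => P n, fun _ => ⟨β, hβ, hm⟩, (iUnion_const _).symm⟩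
  have hQamb : ∀ n, FunAmb α (Q n) := by
    intro n
    obtain ⟨β, hβ, hm⟩ := hQ n
    refine ⟨?_, funMul_mono' hβ.le hm⟩
    rw [funAdd_eq' hα0]
    exact ⟨fun _ => Q n, fun _ => ⟨β, hβ, hm⟩, (iUnion_const _).symm⟩
  -- interleave
  set E : ℕ → Set X := fun n => if Even n then Q (n / 2) else P (n / 2) with hEdef
  have hEamb : ∀ n, FunAmb α (E n) := by
    intro n
    by_cases h : Even n <;> simp only [hEdef, h, if_true, if_false] <;>
      [exact hQamb _; exact hPamb _]
  have hEU : ∀ x : X, ∃ n, x ∈ E n := by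
    intro x
    by_cases hx : x ∈ A
    · have hxB : x ∈ Bᶜ := fun hxB => (hd.ne_of_mem hx hxB) rfl
      rw [hQU, mem_iUnion] at hxB
      obtain ⟨m, hm⟩ := hxB
      refine ⟨2 * m, ?_⟩
      simp [hEdef, even_two_mul m, Nat.mul_div_cancel_left m two_pos, hm]
    · have hxA : x ∈ Aᶜ := hx
      rw [hPU, mem_iUnion] at hxA
      obtain ⟨m, hm⟩ := hxA
      refine ⟨2 * m + 1, ?_⟩
      have hodd : ¬ Even (2 * m + 1) := by simp [Nat.even_add_one, even_two_mul]
      simp [hEdef, hodd, Nat.mul_add_div two_pos, hm]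
  -- partial unions
  set S : ℕ → Set X := fun k => ⋃ m < k, E m with hSdef
  have hSamb : ∀ k, FunAmb α (S k) := by
    intro k
    induction k with
    | zero => simpa [hSdef] using (funAmb_empty' (X := X) (α := α))
    | succ k ih =>
      have : S (k + 1) = S k ∪ E k := Set.biUnion_lt_succ E k
      rw [this]
      exact funAmb_union' hα0 ih (hEamb k)
  set E' : ℕ → Set X := fun n => E n ∩ (S n)ᶜ with hE'def
  have hE'amb : ∀ n, FunAmb α (E' n) := fun n =>
    funAmb_inter' hα0 (hEamb n) (funAmb_compl' (hSamb n))
  have hE'sub : ∀ n, E' n ⊆ E n := fun n => inter_subset_left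
  -- pairwise disjointness of E'
  have hE'disj : ∀ i j : ℕ, i < j → ∀ x, x ∈ E' i → x ∉ E' j := by
    intro i j hij x hxi hxj
    have hxS : x ∈ S j := mem_biUnion hij (hE'sub i hxi)
    exact hxj.2 hxS
  set C : Set X := ⋃ k, E' (2 * k) with hCdef
  -- membership of minimal index
  have hmin : ∀ x : X, ∃ k, x ∈ E' k ∧ ∀ m < k, x ∉ E m := by
    intro x
    have hex := hEU x
    set k := Nat.find hex with hk
    refine ⟨k, ⟨Nat.find_spec hex, ?_⟩, fun m hm => Nat.find_min hex hm⟩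
    intro hxS
    rw [mem_iUnion₂] at hxS
    obtain ⟨m, hm, hxm⟩ := hxS
    exact Nat.find_min hex hm hxm
  -- Cᶜ is the union of odd reduced pieces
  have hCc : Cᶜ = ⋃ k, E' (2 * k + 1) := by
    ext x
    simp only [mem_compl_iff, hCdef, mem_iUnion]
    constructor
    · intro hx
      obtain ⟨k, hxk, _⟩ := hmin x
      rcases Nat.even_or_odd k with he | ho
      · obtain ⟨m, hm⟩ := he
        exact absurd ⟨m, by rw [two_mul] at *; rwa [← hm]⟩ hx
      · obtain ⟨m, hm⟩ := ho
        exact ⟨m, by rwa [← hm]⟩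
    · rintro ⟨m, hm⟩ ⟨k, hk⟩
      rcases lt_trichotomy (2 * k) (2 * m + 1) with h | h | h
      · exact hE'disj _ _ h x hk hm
      · omega
      · exact hE'disj _ _ h x hm hk
  refine ⟨C, ?_, ?_, ?_⟩
  · constructor
    · exact funAdd_iUnion' hα0 (fun k => (hE'amb (2 * k)).1)
    · have : C = Cᶜᶜ := (compl_compl C).symm
      rw [this]
      refine (funCompl' α Cᶜ).2 ?_
      rw [hCc]
      exact funAdd_iUnion' hα0 (fun k => (hE'amb (2 * k + 1)).1)
  · -- A ⊆ C
    intro x hx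
    obtain ⟨k, hxk, hmink⟩ := hmin x
    have heven : Even k := by
      by_contra ho
      rw [Nat.not_even_iff_odd] at ho
      obtain ⟨m, hm⟩ := ho
      have hxE : x ∈ E k := hE'sub k hxk
      have hodd : ¬ Even k := by rw [hm]; simp [Nat.even_add_one, even_two_mul]
      rw [hEdef] at hxE
      simp only [hodd, if_false] at hxE
      have : x ∈ Aᶜ := by rw [hPU]; exact mem_iUnion.2 ⟨k / 2, hxE⟩
      exact this hx
    obtain ⟨m, hm⟩ := heven
    rw [hCdef, mem_iUnion]
    exact ⟨m, by rw [two_mul] at *; rwa [← hm]⟩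
  · -- C ⊆ Bᶜ
    intro x hx
    rw [hCdef, mem_iUnion] at hx
    obtain ⟨k, hk⟩ := hx
    have hxE : x ∈ E (2 * k) := hE'sub _ hk
    rw [hEdef] at hxE
    simp only [even_two_mul, if_true, Nat.mul_div_cancel_left k two_pos] at hxE
    rw [hQU]
    exact mem_iUnion.2 ⟨k, by simpa using hxE⟩
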